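/- Let P be a real polynomial of degree at most 3, let n > 0 be a real number, and let λ be a real number such that P and λ are not both zero. Then the set {u ∈ ℝ : P(u)·e^{−n·u} = λ} contains at most 4 elements. -/

import Mathlib

open Real

/-- If a finset consists of zeros of `f` and the zero set of `deriv f` is finite
with at most `k` elements, then the finset has at most `k+1` elements. -/
lemma finset_zeros_card_le (f : ℝ → ℝ) (hf : Continuous f) (k : ℕ)
    (hd : {x : ℝ | deriv f x = 0}.Finite) (hcard : {x : ℝ | deriv f x = 0}.ncard ≤ k)
    (T : Finset ℝ) (hT : ∀ x ∈ T, f x = 0) : T.card ≤ k + 1 := by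
  by_contra h
  push_neg at h
  obtain ⟨T', hT'sub, hT'card⟩ := Finset.exists_subset_card_eq (s := T) (n := k + 2) (by omega)
  have e := T'.orderIsoOfFin hT'card
  -- Rolle between consecutive elements
  have key : ∀ i : Fin (k + 1), ∃ c,
      ((e i.castSucc : ℝ) < c ∧ c < (e i.succ : ℝ)) ∧ deriv f c = 0 := by
    intro i
    have hab : (e i.castSucc : ℝ) < (e i.succ : ℝ) := by
      exact_mod_cast e.strictMono (Fin.castSucc_lt_succ (i := i))
    have h1 : f (e i.castSucc) = 0 := hT _ (hT'sub (e i.castSucc).2)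
    have h2 : f (e i.succ) = 0 := hT _ (hT'sub (e i.succ).2)
    obtain ⟨c, hc1, hc2⟩ := exists_deriv_eq_zero hab hf.continuousOn (h1.trans h2.symm)
    exact ⟨c, ⟨hc1.1, hc1.2⟩, hc2⟩
  choose c hc hc0 using key
  have hmono : StrictMono c := by
    intro i j hij
    calc c i < (e i.succ : ℝ) := (hc i).2
      _ ≤ (e j.castSucc : ℝ) := by
          rcases eq_or_lt_of_le (Fin.succ_le_castSucc_iff.mpr hij) with h | h
          · exact le_of_eq (by rw [h])
          · exact le_of_lt (by exact_mod_cast e.strictMono h)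
      _ < c j := (hc j).1
  have hsub : ↑(Finset.univ.image c) ⊆ {x : ℝ | deriv f x = 0} := by
    intro x hx
    simp only [Finset.coe_image, Set.mem_image] at hx
    obtain ⟨i, _, rfl⟩ := hx
    exact hc0 i
  have hle : (Finset.univ.image c).card ≤ k := by
    have := Set.ncard_le_ncard hsub hd
    rw [Set.ncard_coe_finset] at this
    exact this.trans hcard
  rw [Finset.card_image_of_injective _ hmono.injective, Finset.card_univ,
    Fintype.card_fin] at hle
  omega

/-- Counting zeros via Rolle: zeros of `f` are at most one more than zeros of `deriv f`. -/
lemma zeros_finite_card_le (f : ℝ → ℝ) (hf : Continuous f) (k : ℕ)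
    (hd : {x : ℝ | deriv f x = 0}.Finite) (hcard : {x : ℝ | deriv f x = 0}.ncard ≤ k) :
    {x : ℝ | f x = 0}.Finite ∧ {x : ℝ | f x = 0}.ncard ≤ k + 1 := by
  have hfin : {x : ℝ | f x = 0}.Finite := by
    by_contra h
    have hinf : {x : ℝ | f x = 0}.Infinite := h
    obtain ⟨T, hTsub, hTcard⟩ := hinf.exists_subset_card_eq (k + 2)
    have := finset_zeros_card_le f hf k hd hcard T (fun x hx => hTsub hx)
    omega
  refine ⟨hfin, ?_⟩
  have := finset_zeros_card_le f hf k hd hcard hfin.toFinset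
    (fun x hx => (hfin.mem_toFinset.mp hx))
  rwa [Set.ncard_eq_toFinset_card _ hfin]

theorem poly_exp_roots_le_four (P : Polynomial ℝ) (hP : P.natDegree ≤ 3)
    (n : ℝ) (hn : 0 < n) (lam : ℝ) (hne : P ≠ 0 ∨ lam ≠ 0) :
    {u : ℝ | P.eval u * Real.exp (-n * u) = lam}.Finite ∧
      {u : ℝ | P.eval u * Real.exp (-n * u) = lam}.ncard ≤ 4 := by
  -- Rewrite the solution set as the zero set of `F 0` where
  -- `F k u = (derivative^[k] P).eval u - lam * n^k * exp (n*u)`.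
  set F : ℕ → ℝ → ℝ := fun k u =>
    ((Polynomial.derivative^[k] P).eval u) - lam * n ^ k * Real.exp (n * u) with hF
  have hset : {u : ℝ | P.eval u * Real.exp (-n * u) = lam} = {u : ℝ | F 0 u = 0} := by
    ext u
    simp only [Set.mem_setOf_eq, hF, Function.iterate_zero, id_eq, pow_zero, mul_one,
      sub_eq_zero]
    constructor
    · intro h
      have := congrArg (· * Real.exp (n * u)) h
      simp only [mul_assoc, ← Real.exp_add] at this
      simpa using this
    · intro h
      rw [h, mul_assoc, ← Real.exp_add]
      simp
  have hcont : ∀ k, Continuous (F k) := by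
    intro k
    exact ((Polynomial.derivative^[k] P).continuous_aeval).sub
      (continuous_const.mul (Real.continuous_exp.comp (continuous_const.mul continuous_id)))
  have hderiv : ∀ k, deriv (F k) = F (k + 1) := by
    intro k
    funext u
    have h1 : HasDerivAt (fun u => (Polynomial.derivative^[k] P).eval u)
        ((Polynomial.derivative^[k + 1] P).eval u) u := by
      have := (Polynomial.derivative^[k] P).hasDerivAt u
      rwa [Function.iterate_succ_apply'] ;
    have h2 : HasDerivAt (fun u => lam * n ^ k * Real.exp (n * u))
        (lam * n ^ (k + 1) * Real.exp (n * u)) u := by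
      have he : HasDerivAt (fun u : ℝ => Real.exp (n * u)) (Real.exp (n * u) * n) u := by
        have := (Real.hasDerivAt_exp (n * u)).comp u
          ((hasDerivAt_id u).const_mul n)
        simpa [mul_comm, Function.comp_def] using this
      have := he.const_mul (lam * n ^ k)
      rw [show lam * n ^ (k + 1) * Real.exp (n * u) = lam * n ^ k * (Real.exp (n * u) * n) by ring]
      exact this
    exact (h1.sub h2).deriv
  rw [hset]
  -- `F 4` has zero set depending on `lam`
  by_cases hlam : lam = 0
  · -- solutions are roots of `P`
    have hPne : P ≠ 0 := hne.resolve_right (by simp [hlam])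
    have hset0 : {u : ℝ | F 0 u = 0} = {u : ℝ | P.eval u = 0} := by
      ext u; simp [hF, hlam]
    rw [hset0]
    have hsub : {u : ℝ | P.eval u = 0} ⊆ ↑P.roots.toFinset := by
      intro u hu
      simp only [Set.mem_setOf_eq] at hu
      simp [Multiset.mem_toFinset, Polynomial.mem_roots, hPne, hu]
    have hfin : {u : ℝ | P.eval u = 0}.Finite :=
      Set.Finite.subset (P.roots.toFinset : Finset ℝ).finite_toSet hsub
    refine ⟨hfin, ?_⟩
    calc {u : ℝ | P.eval u = 0}.ncard ≤ (↑P.roots.toFinset : Set ℝ).ncard :=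
          Set.ncard_le_ncard hsub (P.roots.toFinset : Finset ℝ).finite_toSet
      _ = P.roots.toFinset.card := Set.ncard_coe_finset _
      _ ≤ Multiset.card P.roots := P.roots.toFinset_card_le
      _ ≤ P.natDegree := P.card_roots' 
      _ ≤ 4 := by omega
  · -- `F 4` never vanishes
    have h4 : {x : ℝ | F 4 x = 0} = ∅ := by
      ext x
      simp only [Set.mem_setOf_eq, Set.mem_empty_iff_false, iff_false, hF]
      have : Polynomial.derivative^[4] P = 0 :=
        Polynomial.iterate_derivative_eq_zero (by omega)
      rw [this]
      simp only [Polynomial.eval_zero, zero_sub, neg_eq_zero]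
      positivity
    have step : ∀ k j : ℕ, k + j = 4 →
        {x : ℝ | F k x = 0}.Finite ∧ {x : ℝ | F k x = 0}.ncard ≤ j := by
      intro k j hkj
      induction j generalizing k with
      | zero =>
        have : k = 4 := by omega
        subst this
        rw [h4]
        simp
      | succ m ih =>
        have hm := ih (k + 1) (by omega)
        have := zeros_finite_card_le (F k) (hcont k) m
          (by rw [hderiv k]; exact hm.1) (by rw [hderiv k]; exact hm.2)
        exact this
    exact step 0 4 rfl
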